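/- (Step lemma for the adaptive imbalance ratio of recursive bipartitioning.) Let L > 0 be a real number, let k' ≥ 2 be an integer, set k₁ := ⌈k'/2⌉ and r := ⌈log₂ k'⌉, and let w be a real number with 0 < w ≤ L·k'. Define the adapted imbalance ratio ε' := (L·k'/w)^{1/r} − 1. Then for every real w₁ with 0 < w₁ ≤ (1 + ε')·(k₁/k')·w, it holds that w₁ ≤ L·k₁. -/

import Mathlib

/-- step lemma for the adaptive imbalance ratio of recursive bipartitioning.
Let `L > 0`, `k' ≥ 2` an integer, `k₁ = ⌈k'/2⌉`, `r = ⌈log₂ k'⌉`, and `0 < w ≤ L·k'`.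
With the adapted imbalance ratio `ε' = (L·k'/w)^(1/r) − 1`, every `w₁` with
`0 < w₁ ≤ (1 + ε')·(k₁/k')·w` satisfies `w₁ ≤ L·k₁`. -/
theorem stmt10 (L : ℝ) (hL : 0 < L) (k' : ℕ) (hk : 2 ≤ k')
    (w : ℝ) (hw : 0 < w) (hwle : w ≤ L * k') :
    ∀ w₁ : ℝ, 0 < w₁ →
      w₁ ≤ (1 + ((L * k' / w) ^ ((1 : ℝ) / (Nat.clog 2 k' : ℝ)) - 1)) *
            (((k' + 1) / 2 : ℕ) : ℝ) / (k' : ℝ) * w →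
      w₁ ≤ L * (((k' + 1) / 2 : ℕ) : ℝ) := by
  intro w₁ hw₁ hle
  have hk0 : (0 : ℝ) < (k' : ℝ) := by positivity
  have hr : 1 ≤ Nat.clog 2 k' := Nat.clog_pos one_lt_two hk
  have hrpos : (0 : ℝ) < (Nat.clog 2 k' : ℝ) := by exact_mod_cast Nat.lt_of_lt_of_le Nat.zero_lt_one hr
  set x : ℝ := L * k' / w with hx
  have hx1 : 1 ≤ x := (one_le_div hw).2 hwle
  have hexp : (1 : ℝ) / (Nat.clog 2 k' : ℝ) ≤ 1 := by
    rw [div_le_one hrpos]; exact_mod_cast hr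
  have hxle : x ^ ((1 : ℝ) / (Nat.clog 2 k' : ℝ)) ≤ x := by
    calc x ^ ((1 : ℝ) / (Nat.clog 2 k' : ℝ)) ≤ x ^ (1 : ℝ) :=
          Real.rpow_le_rpow_of_exponent_le hx1 hexp
      _ = x := Real.rpow_one x
  have hk1 : (0 : ℝ) ≤ (((k' + 1) / 2 : ℕ) : ℝ) := by positivity
  have key : (1 + (x ^ ((1 : ℝ) / (Nat.clog 2 k' : ℝ)) - 1)) *
      (((k' + 1) / 2 : ℕ) : ℝ) / (k' : ℝ) * w ≤ L * (((k' + 1) / 2 : ℕ) : ℝ) := by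
    have h2 : x * (((k' + 1) / 2 : ℕ) : ℝ) / (k' : ℝ) * w = L * (((k' + 1) / 2 : ℕ) : ℝ) := by
      rw [hx]
      field_simp
    rw [add_sub_cancel]
    calc x ^ ((1 : ℝ) / (Nat.clog 2 k' : ℝ)) * (((k' + 1) / 2 : ℕ) : ℝ) / (k' : ℝ) * w
        ≤ x * (((k' + 1) / 2 : ℕ) : ℝ) / (k' : ℝ) * w := by
          apply mul_le_mul_of_nonneg_right _ hw.le
          gcongr
      _ = L * (((k' + 1) / 2 : ℕ) : ℝ) := h2
  exact hle.trans key
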